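/- arXiv:2502.19572 — 2 statements merged into one kernel-verified Lean document; each statement's English description precedes it below -/
import Mathlib

section
/- Let γ ≥ 0 and λ > 0, and set Γ_t(λ) := Q_t(λ)^{−1/2} e^{−tλ} where Q_t(λ) = (1/2)λ^{−(1+2γ)}(1 − e^{−2tλ}). Then there exists a constant c > 0, independent of λ and t, such that Γ_t(λ) ≤ c · t^{−(1/2 + γ)} for all t > 0 and all λ > 0. -/
open Real

/-- Key scalar inequality: for `1 ≤ a ≤ n` and `x > 0`,
`x ^ a ≤ n! * (exp (2x) - 1)`. -/
lemma heat_key (a : ℝ) (ha : 1 ≤ a) (n : ℕ) (hn : a ≤ n) (x : ℝ) (hx : 0 < x) :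
    x ^ a ≤ (n.factorial : ℝ) * (Real.exp (2 * x) - 1) := by
  have hfact : (1 : ℝ) ≤ n.factorial := by
    exact_mod_cast Nat.one_le_iff_ne_zero.2 n.factorial_ne_zero
  rcases le_or_gt x (1/2) with hx1 | hx1
  · have hxle1 : x ≤ 1 := by linarith
    have h1 : x ^ a ≤ x ^ (1:ℝ) := Real.rpow_le_rpow_of_exponent_ge hx hxle1 ha
    have h2 : 2 * x + 1 ≤ Real.exp (2 * x) := Real.add_one_le_exp (2 * x)
    calc x ^ a ≤ x ^ (1:ℝ) := h1
      _ = x := Real.rpow_one x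
      _ ≤ Real.exp (2*x) - 1 := by linarith
      _ ≤ (n.factorial : ℝ) * (Real.exp (2*x) - 1) := by nlinarith
  · set u := 2 * x with hu
    have hu1 : 1 ≤ u := by rw [hu]; linarith
    have hu0 : (0:ℝ) ≤ u := by linarith
    have h1 : x ^ a = u ^ a / 2 ^ a := by
      rw [← Real.div_rpow hu0 (by norm_num : (0:ℝ) ≤ 2)]
      congr 1
      field_simp [hu]
      linarith
    have h2a : (2:ℝ) ≤ 2 ^ a := by
      calc (2:ℝ) = 2 ^ (1:ℝ) := (Real.rpow_one 2).symm
        _ ≤ 2 ^ a := Real.rpow_le_rpow_of_exponent_le (by norm_num) ha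
    have hua : u ^ a ≤ u ^ (n:ℝ) := Real.rpow_le_rpow_of_exponent_le hu1 hn
    have huan : u ^ (n:ℝ) = u ^ n := Real.rpow_natCast u n
    have h3 : u ^ n ≤ (n.factorial : ℝ) * Real.exp u := by
      have h := Real.pow_div_factorial_le_exp (x := u) hu0 n
      have hf : (0:ℝ) < n.factorial := by exact_mod_cast n.factorial_pos
      rw [div_le_iff₀ hf] at h
      linarith
    have h4 : Real.exp u ≤ 2 * (Real.exp u - 1) := by
      have : (2:ℝ) ≤ Real.exp u := by
        calc (2:ℝ) ≤ Real.exp 1 := by have := Real.add_one_le_exp (1:ℝ); linarith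
          _ ≤ Real.exp u := Real.exp_le_exp.2 hu1
      linarith
    have hua' : u ^ a ≤ (n.factorial : ℝ) * Real.exp u := by
      rw [← huan] at h3; linarith
    have h5 : u ^ a / 2 ^ a ≤ u ^ a / 2 :=
      div_le_div_of_nonneg_left (Real.rpow_nonneg hu0 a) (by norm_num) h2a
    rw [h1, hu]
    calc u ^ a / 2 ^ a ≤ u ^ a / 2 := h5
      _ ≤ (n.factorial : ℝ) * Real.exp u / 2 := by linarith
      _ ≤ (n.factorial : ℝ) * (Real.exp u - 1) := by nlinarith

/-- uniform bound Γ_t(λ) = Q_t(λ)^{−1/2} e^{−tλ} ≤ c t^{−(1/2+γ)}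
with Q_t(λ) = (1/2)λ^{−(1+2γ)}(1 − e^{−2tλ}). -/
theorem heat_gamma_bound
    (γ : ℝ) (hγ : 0 ≤ γ) :
    ∃ c > (0:ℝ), ∀ t > (0:ℝ), ∀ lam > (0:ℝ),
      ((1/2) * lam ^ (-(1 + 2 * γ)) * (1 - Real.exp (-2 * t * lam))) ^ (-(1:ℝ)/2) *
        Real.exp (-t * lam) ≤ c * t ^ (-(1/2 + γ)) := by
  set n : ℕ := ⌈2 * γ⌉₊ + 1 with hn
  have hK : (1:ℝ) ≤ n.factorial := by
    exact_mod_cast Nat.one_le_iff_ne_zero.2 n.factorial_ne_zero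
  have hKpos : (0:ℝ) < 2 * n.factorial := by linarith
  refine ⟨Real.sqrt (2 * n.factorial), Real.sqrt_pos.2 hKpos, ?_⟩
  intro t ht lam hlam
  have hx : 0 < t * lam := mul_pos ht hlam
  have hexp : Real.exp (-2 * t * lam) < 1 := by
    apply Real.exp_lt_one_iff.2; nlinarith
  have h1e : 0 < 1 - Real.exp (-2 * t * lam) := by linarith
  have hlr : 0 < lam ^ (-(1 + 2*γ)) := Real.rpow_pos_of_pos hlam _
  set Q := (1/2) * lam ^ (-(1 + 2 * γ)) * (1 - Real.exp (-2 * t * lam)) with hQ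
  have hQpos : 0 < Q := by positivity
  set A := Q ^ (-(1:ℝ)/2) * Real.exp (-t * lam) with hA
  set B := Real.sqrt (2 * n.factorial) * t ^ (-(1/2 + γ)) with hB
  have hApos : 0 < A := by positivity
  have hBpos : 0 < B := by positivity
  have hsq : A ^ 2 ≤ B ^ 2 → A ≤ B := by
    intro h
    have h' := Real.sqrt_le_sqrt h
    rwa [Real.sqrt_sq hApos.le, Real.sqrt_sq hBpos.le] at h'
  apply hsq
  have hA2 : A ^ 2 = Q⁻¹ * Real.exp (-2 * t * lam) := by
    rw [hA, mul_pow, ← Real.exp_nat_mul, ← Real.rpow_natCast (Q ^ (-(1:ℝ)/2)) 2,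
      ← Real.rpow_mul hQpos.le]
    norm_num
    rw [Real.rpow_neg_one]; ring_nf
  have hB2 : B ^ 2 = (2 * n.factorial : ℝ) * t ^ (-(1 + 2*γ)) := by
    rw [hB, mul_pow, Real.sq_sqrt hKpos.le, ← Real.rpow_natCast (t ^ (-(1/2+γ))) 2,
      ← Real.rpow_mul ht.le]
    norm_num
    ring_nf
    simp
  rw [hA2, hB2]
  rw [inv_mul_eq_div, div_le_iff₀ hQpos, hQ]
  have htl : t ^ (-(1 + 2*γ)) * lam ^ (-(1 + 2*γ)) = (t * lam) ^ (-(1 + 2*γ)) :=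
    (Real.mul_rpow ht.le hlam.le).symm
  have key := heat_key (1 + 2*γ) (by linarith) n
    (by
      have hc := Nat.le_ceil (2*γ)
      have hn' : ((⌈2*γ⌉₊ : ℝ) + 1) = (n:ℝ) := by rw [hn]; push_cast; ring
      linarith) (t * lam) hx
  have hxpos : (0:ℝ) < (t*lam) ^ (1 + 2*γ) := Real.rpow_pos_of_pos hx _
  have hinv : (t*lam) ^ (-(1 + 2*γ)) = ((t*lam) ^ (1 + 2*γ))⁻¹ := by
    rw [Real.rpow_neg hx.le]
  have hepos : (0:ℝ) < Real.exp (-2 * t * lam) := Real.exp_pos _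
  have hE : Real.exp (2 * (t*lam)) - 1 =
      (1 - Real.exp (-2 * t * lam)) / Real.exp (-2 * t * lam) := by
    rw [eq_div_iff hepos.ne', sub_mul, one_mul, ← Real.exp_add]
    ring_nf
    simp
  have key2 : (t*lam) ^ (1 + 2*γ) * Real.exp (-2 * t * lam) ≤
      (n.factorial : ℝ) * (1 - Real.exp (-2 * t * lam)) := by
    rw [hE] at key
    have := mul_le_mul_of_nonneg_right key hepos.le
    calc (t*lam) ^ (1 + 2*γ) * Real.exp (-2 * t * lam)
        ≤ (n.factorial : ℝ) * ((1 - Real.exp (-2 * t * lam)) / Real.exp (-2 * t * lam)) *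
            Real.exp (-2 * t * lam) := this
      _ = (n.factorial : ℝ) * (1 - Real.exp (-2 * t * lam)) := by
          field_simp
  calc Real.exp (-2 * t * lam)
      = ((t*lam) ^ (1 + 2*γ))⁻¹ * ((t*lam) ^ (1 + 2*γ) * Real.exp (-2 * t * lam)) := by
        field_simp
    _ ≤ ((t*lam) ^ (1 + 2*γ))⁻¹ * ((n.factorial : ℝ) * (1 - Real.exp (-2 * t * lam))) :=
        mul_le_mul_of_nonneg_left key2 (by positivity)
    _ = (2 * n.factorial : ℝ) * t ^ (-(1 + 2*γ)) * Q := by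
        rw [hQ, show ((t*lam) ^ (1 + 2*γ))⁻¹ = t ^ (-(1 + 2*γ)) * lam ^ (-(1 + 2*γ)) from by
          rw [htl, hinv]]
        ring
end

section
/- Let γ ≥ 0, α ∈ (0,1), δ > 0 with δ > 1/(2γ + α), c > 0, and μ_n = c n^δ. Then there exists η ∈ (0,1) such that for every t > 0: ∫₀ᵗ s^{−η} Σ_{n=1}^∞ μ_n^{−2γ} e^{−ρ μ_n^{α} s} ds < ∞ for any fixed ρ > 0. -/
open Real MeasureTheory

/-- Auxiliary: `exp (-x) ≤ x ^ (-θ)` for `x > 0`, `0 ≤ θ ≤ 1`. -/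
lemma exp_neg_le_rpow_neg {θ x : ℝ} (hθ0 : 0 ≤ θ) (hθ1 : θ ≤ 1) (hx : 0 < x) :
    Real.exp (-x) ≤ x ^ (-θ) := by
  have h1 : Real.exp (-x) ≤ (1 + x)⁻¹ := by
    rw [Real.exp_neg]
    exact inv_anti₀ (by linarith) (by linarith [Real.add_one_le_exp x])
  have h2 : (1 + x) ^ (-(1:ℝ)) ≤ (1 + x) ^ (-θ) :=
    Real.rpow_le_rpow_of_exponent_le (by linarith) (by linarith)
  have h3 : (1 + x) ^ (-θ) ≤ x ^ (-θ) :=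
    Real.rpow_le_rpow_of_nonpos hx (by linarith) (by linarith)
  calc Real.exp (-x) ≤ (1 + x)⁻¹ := h1
    _ = (1 + x) ^ (-(1:ℝ)) := (Real.rpow_neg_one _).symm
    _ ≤ (1 + x) ^ (-θ) := h2
    _ ≤ x ^ (-θ) := h3

/-- trace condition for the damped stochastic equation: with
μ_n = c n^δ and δ > 1/(2γ+α), there is η ∈ (0,1) such that
s ↦ s^{−η} Σ_n μ_n^{−2γ} e^{−ρ μ_n^α s} is integrable on (0,t] for all t > 0. -/
theorem damped_trace_condition
    (γ α δ c ρ : ℝ) (hγ : 0 ≤ γ) (hα : α ∈ Set.Ioo (0:ℝ) 1)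
    (hδ : 0 < δ) (hδ' : δ > 1 / (2 * γ + α)) (hc : 0 < c) (hρ : 0 < ρ) :
    ∃ η ∈ Set.Ioo (0:ℝ) 1, ∀ t > (0:ℝ),
      IntegrableOn
        (fun s : ℝ => s ^ (-η) *
          ∑' n : ℕ, (c * ((n : ℝ) + 1) ^ δ) ^ (-(2 * γ)) *
            Real.exp (-ρ * (c * ((n : ℝ) + 1) ^ δ) ^ α * s))
        (Set.Ioc 0 t) := by
  obtain ⟨hα0, hα1⟩ := hα
  have hsum_pos : 0 < 2 * γ + α := by linarith
  have hδα : 1 < δ * (2 * γ + α) := by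
    rw [gt_iff_lt, div_lt_iff₀ hsum_pos] at hδ'
    linarith
  have hαδ : 0 < α * δ := mul_pos hα0 hδ
  set b : ℝ := (1 - 2 * γ * δ) / (α * δ) with hb
  have hb1 : b < 1 := by
    rw [hb, div_lt_one hαδ]; nlinarith
  set θ : ℝ := max (1/2) ((b+1)/2) with hθdef
  have hθ0 : 0 < θ := lt_of_lt_of_le (by norm_num) (le_max_left _ _)
  have hθ1 : θ < 1 := max_lt (by norm_num) (by linarith)
  have hθb : b < θ := lt_of_lt_of_le (by linarith) (le_max_right _ _)
  have hkey : 1 < δ * (2 * γ + θ * α) := by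
    have h := (div_lt_iff₀ hαδ).1 hθb
    nlinarith
  set q : ℝ := 2 * γ + θ * α with hq
  have hq0 : 0 < q := by nlinarith
  set η : ℝ := (1 - θ) / 2 with hη
  refine ⟨η, ⟨by rw [hη]; linarith, by rw [hη]; linarith⟩, ?_⟩
  intro t ht
  set μ : ℕ → ℝ := fun n => c * ((n : ℝ) + 1) ^ δ with hμ
  have hn1 : ∀ n : ℕ, (0:ℝ) < (n : ℝ) + 1 := fun n => by positivity
  have hμpos : ∀ n, 0 < μ n := fun n => mul_pos hc (Real.rpow_pos_of_pos (hn1 n) δ)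
  -- summability of the dominating p-series
  have hsq : Summable (fun n : ℕ => μ n ^ (-q)) := by
    have h1 : Summable (fun n : ℕ => (n : ℝ) ^ (-(δ * q))) :=
      Real.summable_nat_rpow.2 (by linarith)
    have h2 : Summable (fun n : ℕ => ((n : ℝ) + 1) ^ (-(δ * q))) := by
      have := (summable_nat_add_iff 1).2 h1
      convert this using 2 with n
      · rfl
      push_cast
      rfl
    have h3 : Summable (fun n : ℕ => c ^ (-q) * ((n : ℝ) + 1) ^ (-(δ * q))) := h2.mul_left _
    convert h3 using 2 with n
    rw [hμ]
    rw [Real.mul_rpow hc.le (Real.rpow_pos_of_pos (hn1 n) δ).le,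
      ← Real.rpow_mul (hn1 n).le]
    congr 1
    ring
  -- pointwise bound on each term, for s > 0
  have hterm : ∀ s : ℝ, 0 < s → ∀ n : ℕ,
      μ n ^ (-(2 * γ)) * Real.exp (-ρ * μ n ^ α * s)
        ≤ ρ ^ (-θ) * s ^ (-θ) * μ n ^ (-q) := by
    intro s hs n
    have hμa : 0 < μ n ^ α := Real.rpow_pos_of_pos (hμpos n) α
    have hx : 0 < ρ * μ n ^ α * s := by positivity
    have h1 : Real.exp (-ρ * μ n ^ α * s) ≤ (ρ * μ n ^ α * s) ^ (-θ) := by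
      have := exp_neg_le_rpow_neg hθ0.le hθ1.le hx
      rw [show -ρ * μ n ^ α * s = -(ρ * μ n ^ α * s) by ring]
      exact this
    have h2 : (ρ * μ n ^ α * s) ^ (-θ) = ρ ^ (-θ) * (μ n ^ α) ^ (-θ) * s ^ (-θ) := by
      rw [Real.mul_rpow (by positivity) hs.le, Real.mul_rpow hρ.le hμa.le]
    have h3 : μ n ^ (-(2 * γ)) * (μ n ^ α) ^ (-θ) = μ n ^ (-q) := by
      rw [← Real.rpow_mul (hμpos n).le, ← Real.rpow_add (hμpos n), hq]
      ring_nf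
    calc μ n ^ (-(2 * γ)) * Real.exp (-ρ * μ n ^ α * s)
        ≤ μ n ^ (-(2 * γ)) * (ρ * μ n ^ α * s) ^ (-θ) := by
          apply mul_le_mul_of_nonneg_left h1 (Real.rpow_nonneg (hμpos n).le _)
      _ = ρ ^ (-θ) * s ^ (-θ) * (μ n ^ (-(2 * γ)) * (μ n ^ α) ^ (-θ)) := by
          rw [h2]; ring
      _ = ρ ^ (-θ) * s ^ (-θ) * μ n ^ (-q) := by rw [h3]
  -- summability of the actual series for s > 0
  have hsummable : ∀ s : ℝ, 0 < s →
      Summable (fun n : ℕ => μ n ^ (-(2 * γ)) * Real.exp (-ρ * μ n ^ α * s)) := by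
    intro s hs
    refine Summable.of_nonneg_of_le (fun n => by positivity) (hterm s hs)
      ((hsq.mul_left _))
  -- the dominating function
  set K : ℝ := ∑' n : ℕ, μ n ^ (-q) with hK
  have hK0 : 0 ≤ K := tsum_nonneg fun n => (Real.rpow_nonneg (hμpos n).le _)
  have htsum_le : ∀ s : ℝ, 0 < s →
      (∑' n : ℕ, μ n ^ (-(2 * γ)) * Real.exp (-ρ * μ n ^ α * s))
        ≤ ρ ^ (-θ) * s ^ (-θ) * K := by
    intro s hs
    have := Summable.tsum_le_tsum (hterm s hs) (hsummable s hs) (hsq.mul_left (ρ ^ (-θ) * s ^ (-θ)))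
    rwa [tsum_mul_left] at this
  -- integrable dominating function
  have hg : IntegrableOn (fun s : ℝ => ρ ^ (-θ) * K * s ^ (-(η + θ))) (Set.Ioc 0 t) := by
    have h1 : IntervalIntegrable (fun s : ℝ => s ^ (-(η + θ))) volume 0 t :=
      intervalIntegral.intervalIntegrable_rpow' (by rw [hη]; linarith)
    have h2 : IntegrableOn (fun s : ℝ => s ^ (-(η + θ))) (Set.Ioc 0 t) := h1.1
    exact h2.const_mul _
  -- measurability
  have hmeasF : Measurable (fun s : ℝ =>
      (∑' n : ℕ, ENNReal.ofReal (μ n ^ (-(2 * γ)) * Real.exp (-ρ * μ n ^ α * s))).toReal) := by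
    apply Measurable.ennreal_toReal
    apply Measurable.ennreal_tsum
    intro n
    apply ENNReal.measurable_ofReal.comp
    exact (measurable_const.mul ((measurable_const.mul measurable_id).exp))
  have hmeas : AEStronglyMeasurable
      (fun s : ℝ => s ^ (-η) *
        ∑' n : ℕ, μ n ^ (-(2 * γ)) * Real.exp (-ρ * μ n ^ α * s))
      (volume.restrict (Set.Ioc 0 t)) := by
    have h1 : Measurable (fun s : ℝ => s ^ (-η) *
        (∑' n : ℕ, ENNReal.ofReal (μ n ^ (-(2 * γ)) * Real.exp (-ρ * μ n ^ α * s))).toReal) :=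
      ((by fun_prop : Measurable fun s : ℝ => s ^ (-η))).mul hmeasF
    apply h1.aestronglyMeasurable.congr
    rw [Filter.eventuallyEq_iff_exists_mem]
    refine ⟨Set.Ioc 0 t, self_mem_ae_restrict measurableSet_Ioc, ?_⟩
    intro s hs
    have hs0 : 0 < s := hs.1
    have heq : ENNReal.ofReal (∑' n : ℕ, μ n ^ (-(2 * γ)) * Real.exp (-ρ * μ n ^ α * s))
        = ∑' n : ℕ, ENNReal.ofReal (μ n ^ (-(2 * γ)) * Real.exp (-ρ * μ n ^ α * s)) :=
      ENNReal.ofReal_tsum_of_nonneg (fun n => by positivity) (hsummable s hs0)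
    simp only [← heq, ENNReal.toReal_ofReal
      (tsum_nonneg (fun n : ℕ => by positivity :
        ∀ n : ℕ, (0:ℝ) ≤ μ n ^ (-(2 * γ)) * Real.exp (-ρ * μ n ^ α * s)))]
  -- conclude by domination
  apply Integrable.mono' hg hmeas
  rw [Filter.eventually_iff_exists_mem]
  refine ⟨Set.Ioc 0 t, self_mem_ae_restrict measurableSet_Ioc, ?_⟩
  intro s hs
  have hs0 : 0 < s := hs.1
  have htn : 0 ≤ ∑' n : ℕ, μ n ^ (-(2 * γ)) * Real.exp (-ρ * μ n ^ α * s) :=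
    tsum_nonneg fun n => by positivity
  have hnorm : ‖s ^ (-η) * ∑' n : ℕ, μ n ^ (-(2 * γ)) * Real.exp (-ρ * μ n ^ α * s)‖
      = s ^ (-η) * ∑' n : ℕ, μ n ^ (-(2 * γ)) * Real.exp (-ρ * μ n ^ α * s) := by
    rw [Real.norm_eq_abs, abs_of_nonneg]
    positivity
  rw [hnorm]
  calc s ^ (-η) * ∑' n : ℕ, μ n ^ (-(2 * γ)) * Real.exp (-ρ * μ n ^ α * s)
      ≤ s ^ (-η) * (ρ ^ (-θ) * s ^ (-θ) * K) := by
        apply mul_le_mul_of_nonneg_left (htsum_le s hs0) (Real.rpow_nonneg hs0.le _)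
    _ = ρ ^ (-θ) * K * (s ^ (-η) * s ^ (-θ)) := by ring
    _ = ρ ^ (-θ) * K * s ^ (-(η + θ)) := by
        rw [← Real.rpow_add hs0, neg_add]
end
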